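/- For every integer n ≥ 2 there exists a real number β_n ∈ (1,2) such that U_n = (β_n, 2); that is, the set of β ∈ (1,2) for which Σ_β contains a periodic sequence of smallest period n is a nonempty open interval whose right endpoint is 2 and whose left endpoint β_n is not itself in U_n. -/

import Mathlib

/-- A 0-1 sequence: all values are at most 1. Index `k` corresponds to `ε_{k+1}` in the paper. -/
def isSeq (ε : ℕ → ℕ) : Prop := ∀ k, ε k ≤ 1

/-- The shift map σ. -/
def shift (ε : ℕ → ℕ) : ℕ → ℕ := fun n => ε (n + 1)

/-- The mirror image ε̄, (ε̄)_n = 1 - ε_n. -/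
def mirror (ε : ℕ → ℕ) : ℕ → ℕ := fun n => 1 - ε n

/-- Strict lexicographic order on sequences. -/
def lexLt (a b : ℕ → ℕ) : Prop := ∃ k, (∀ j, j < k → a j = b j) ∧ a k < b k

/-- Non-strict lexicographic order. -/
def lexLe (a b : ℕ → ℕ) : Prop := lexLt a b ∨ a = b

/-- ε is periodic with smallest period n ≥ 1. -/
def periodicSmallest (n : ℕ) (ε : ℕ → ℕ) : Prop :=
  1 ≤ n ∧ shift^[n] ε = ε ∧ ∀ j, 1 ≤ j → j < n → shift^[j] ε ≠ ε

/-- π_β(ε) = Σ_{k≥1} ε_k β^{-k}. -/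
noncomputable def piB (β : ℝ) (ε : ℕ → ℕ) : ℝ := ∑' k : ℕ, (ε k : ℝ) / β ^ (k + 1)

/-- ε is a unique β-expansion. -/
def memSigma (β : ℝ) (ε : ℕ → ℕ) : Prop :=
  isSeq ε ∧ ∀ ε', isSeq ε' → piB β ε' = piB β ε → ε' = ε

/-- U_n: the set of β ∈ (1,2) such that Σ_β contains a periodic sequence of
smallest period n. -/
def U (n : ℕ) : Set ℝ :=
  {β | 1 < β ∧ β < 2 ∧ ∃ ε, memSigma β ε ∧ periodicSmallest n ε}

open Filter Topology Finset

lemma isSeq_shift {ε} (h : isSeq ε) : isSeq (shift ε) := fun k => h _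
lemma isSeq_iter_shift {ε} (h : isSeq ε) (k : ℕ) : isSeq (shift^[k] ε) := by
  induction k with
  | zero => exact h
  | succ k ih => rw [Function.iterate_succ_apply']; exact isSeq_shift ih

lemma isSeq_mirror (ε) : isSeq (mirror ε) := fun k => Nat.sub_le _ _

lemma shift_iterate (ε : ℕ → ℕ) (k m : ℕ) : shift^[k] ε m = ε (m + k) := by
  induction k generalizing ε with
  | zero => rfl
  | succ k ih =>
      rw [Function.iterate_succ_apply, ih (shift ε)]
      simp only [shift]
      exact congrArg ε (by omega)

lemma mirror_shift (ε : ℕ → ℕ) (k : ℕ) :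
    mirror (shift^[k] ε) = shift^[k] (mirror ε) := by
  funext m; simp [mirror, shift_iterate]

section Beta
variable {β : ℝ} (hβ : 1 < β)

include hβ in
lemma summable_piB {ε : ℕ → ℕ} (hε : isSeq ε) :
    Summable (fun k : ℕ => (ε k : ℝ) / β ^ (k + 1)) := by
  have hb0 : 0 < β := lt_trans one_pos hβ
  have hinv : (0:ℝ) ≤ β⁻¹ := by positivity
  have hinv1 : β⁻¹ < 1 := by rw [inv_lt_one_iff₀]; right; exact hβ
  have hg : Summable (fun k : ℕ => β⁻¹ * (β⁻¹) ^ k) :=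
    (summable_geometric_of_lt_one hinv hinv1).mul_left _
  refine Summable.of_nonneg_of_le (fun k => by positivity) (fun k => ?_) hg
  have h1 : (ε k : ℝ) ≤ 1 := by exact_mod_cast hε k
  calc (ε k : ℝ) / β ^ (k+1) ≤ 1 / β ^ (k+1) := by gcongr
    _ = β⁻¹ * β⁻¹ ^ k := by
        rw [one_div, pow_succ, mul_inv, inv_pow]; ring

include hβ in
lemma piB_nonneg {ε : ℕ → ℕ} : 0 ≤ piB β ε := by
  apply tsum_nonneg; intro k
  have hb0 : 0 < β := lt_trans one_pos hβ
  positivity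

include hβ in
lemma piB_ones : piB β (fun _ => 1) = 1 / (β - 1) := by
  have hb0 : 0 < β := lt_trans one_pos hβ
  have hinv : (0:ℝ) ≤ β⁻¹ := by positivity
  have hinv1 : β⁻¹ < 1 := by rw [inv_lt_one_iff₀]; right; exact hβ
  have : piB β (fun _ => 1) = ∑' k : ℕ, β⁻¹ * β⁻¹ ^ k := by
    unfold piB
    congr 1; funext k
    rw [Nat.cast_one, one_div, pow_succ, mul_inv, inv_pow]; ring
  rw [this, tsum_mul_left, tsum_geometric_of_lt_one hinv hinv1]
  field_simp

include hβ in
lemma piB_add_mirror {ε : ℕ → ℕ} (hε : isSeq ε) :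
    piB β ε + piB β (mirror ε) = 1 / (β - 1) := by
  have h1 := summable_piB hβ hε
  have h2 := summable_piB hβ (isSeq_mirror ε)
  rw [piB, piB, ← Summable.tsum_add h1 h2, ← piB_ones hβ]
  unfold piB
  congr 1; funext k
  have : ((mirror ε k : ℝ)) = 1 - (ε k : ℝ) := by
    simp [mirror, Nat.cast_sub (hε k)]
  rw [← add_div, this]; norm_num

include hβ in
lemma piB_le {ε : ℕ → ℕ} (hε : isSeq ε) : piB β ε ≤ 1 / (β - 1) := by
  have := piB_add_mirror hβ hε
  have h2 := piB_nonneg (β := β) hβ (ε := mirror ε)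
  linarith

include hβ in
lemma piB_shift_eq {ε : ℕ → ℕ} (hε : isSeq ε) :
    β * piB β ε = (ε 0 : ℝ) + piB β (shift ε) := by
  have hb0 : 0 < β := lt_trans one_pos hβ
  have h1 := summable_piB hβ hε
  rw [piB, h1.tsum_eq_zero_add, mul_add]
  have e0 : β * ((ε 0 : ℝ) / β ^ (0+1)) = (ε 0 : ℝ) := by
    field_simp; ring
  rw [e0]
  congr 1
  rw [← tsum_mul_left]
  unfold piB shift
  congr 1; funext k
  rw [pow_succ]
  field_simp

include hβ in
lemma piB_split {ε : ℕ → ℕ} (hε : isSeq ε) (k : ℕ) :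
    piB β ε = (∑ j ∈ Finset.range k, (ε j : ℝ) / β ^ (j+1))
      + piB β (shift^[k] ε) / β ^ k := by
  have hb0 : 0 < β := lt_trans one_pos hβ
  have h1 := summable_piB hβ hε
  rw [piB, ← h1.sum_add_tsum_nat_add k]
  congr 1
  rw [piB, div_eq_mul_inv, ← tsum_mul_right]
  congr 1; funext i
  rw [shift_iterate]
  have hpw : β ^ (i + k + 1) = β ^ (i+1) * β ^ k := by rw [← pow_add]; congr 1; omega
  rw [hpw]
  field_simp

include hβ in
lemma piB_antitone {β' : ℝ} (hle : β ≤ β') {ε : ℕ → ℕ} (hε : isSeq ε) :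
    piB β' ε ≤ piB β ε := by
  have hβ' : 1 < β' := lt_of_lt_of_le hβ hle
  have hb0 : 0 < β := lt_trans one_pos hβ
  apply Summable.tsum_le_tsum _ (summable_piB hβ' hε) (summable_piB hβ hε)
  intro k
  gcongr

include hβ in
lemma piB_periodic {ε : ℕ → ℕ} (hε : isSeq ε) {n : ℕ} (hn : 1 ≤ n)
    (hp : shift^[n] ε = ε) :
    piB β ε = (∑ j ∈ Finset.range n, (ε j : ℝ) / β ^ (j+1)) * β ^ n / (β ^ n - 1) := by
  have hb0 : 0 < β := lt_trans one_pos hβ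
  have hbn : 1 < β ^ n := one_lt_pow₀ hβ (by omega)
  have h := piB_split hβ hε n
  rw [hp] at h
  have hne : β ^ n - 1 ≠ 0 := by linarith
  rw [eq_div_iff hne]
  field_simp at h
  linarith [h]


end Beta

noncomputable def grem (β y : ℝ) : ℕ → ℝ
  | 0 => y
  | (m+1) => β * grem β y m - (if 1 ≤ β * grem β y m then 1 else 0)

noncomputable def gdig (β y : ℝ) (m : ℕ) : ℕ := if 1 ≤ β * grem β y m then 1 else 0

lemma isSeq_gdig (β y : ℝ) : isSeq (gdig β y) := by
  intro k; unfold gdig; split <;> norm_num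

lemma grem_mem {β y : ℝ} (hβ : 1 < β) (hβ2 : β < 2) (hy0 : 0 ≤ y)
    (hy1 : y ≤ 1 / (β - 1)) : ∀ m, 0 ≤ grem β y m ∧ grem β y m ≤ 1 / (β - 1) := by
  have hb1 : 0 < β - 1 := by linarith
  have hone : (1:ℝ) ≤ 1 / (β - 1) := by
    rw [le_div_iff₀ hb1]; linarith
  intro m
  induction m with
  | zero => exact ⟨hy0, hy1⟩
  | succ m ih =>
    obtain ⟨h0, h1⟩ := ih
    show 0 ≤ β * grem β y m - _ ∧ β * grem β y m - _ ≤ _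
    split
    · rename_i hge
      constructor
      · linarith
      · have : β * grem β y m ≤ β / (β - 1) := by
          calc β * grem β y m ≤ β * (1/(β-1)) := by nlinarith
            _ = β / (β-1) := by ring
        have : β / (β - 1) - 1 = 1 / (β - 1) := by field_simp; ring
        linarith
    · rename_i hlt
      push_neg at hlt
      have hone' : (1:ℝ) ≤ (β-1)⁻¹ := by rw [← one_div]; exact hone
      constructor
      · nlinarith
      · rw [sub_zero]
        linarith

lemma grem_partial {β y : ℝ} (hβ : 1 < β) :
    ∀ M, (∑ m ∈ Finset.range M, (gdig β y m : ℝ) / β ^ (m+1))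
      = y - grem β y M / β ^ M := by
  have hb0 : 0 < β := by linarith
  intro M
  induction M with
  | zero => simp [grem]
  | succ M ih =>
    rw [Finset.sum_range_succ, ih]
    have hg : grem β y (M+1) = β * grem β y M - (gdig β y M : ℝ) := by
      rw [grem]
      unfold gdig
      split <;> norm_num
    rw [hg, pow_succ]
    field_simp
    ring

lemma piB_gdig {β y : ℝ} (hβ : 1 < β) (hβ2 : β < 2) (hy0 : 0 ≤ y)
    (hy1 : y ≤ 1 / (β - 1)) : piB β (gdig β y) = y := by
  have hb0 : 0 < β := by linarith
  have hsum := summable_piB hβ (isSeq_gdig β y)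
  have htend : Tendsto (fun M => ∑ m ∈ Finset.range M, (gdig β y m : ℝ) / β ^ (m+1))
      atTop (nhds y) := by
    have heq : (fun M => ∑ m ∈ Finset.range M, (gdig β y m : ℝ) / β ^ (m+1))
        = fun M => y - grem β y M / β ^ M := by
      funext M; exact grem_partial hβ M
    rw [heq]
    have h0 : Tendsto (fun M : ℕ => grem β y M / β ^ M) atTop (nhds 0) := by
      have hb : Tendsto (fun M : ℕ => (1/(β-1)) * (β⁻¹) ^ M) atTop (nhds 0) := by
        have h3 : Tendsto (fun M : ℕ => (β⁻¹) ^ M) atTop (nhds 0) :=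
          tendsto_pow_atTop_nhds_zero_of_lt_one (by positivity)
            (by rw [inv_lt_one_iff₀]; right; exact hβ)
        simpa using h3.const_mul (1/(β-1))
      apply squeeze_zero (fun M => by
          have := (grem_mem hβ hβ2 hy0 hy1 M).1
          positivity)
        (fun M => ?_) hb
      have h2 := (grem_mem hβ hβ2 hy0 hy1 M).2
      have h3 : (0:ℝ) ≤ (β⁻¹)^M := by positivity
      rw [div_eq_mul_inv, ← inv_pow]
      exact mul_le_mul_of_nonneg_right h2 h3
    have h4 : Tendsto (fun M : ℕ => y - grem β y M / β ^ M) atTop (nhds (y - 0)) :=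
      tendsto_const_nhds.sub h0
    simpa using h4
  have h2 := hsum.hasSum.tendsto_sum_nat
  exact tendsto_nhds_unique h2 htend

/-- the key pointwise condition: at step k only one digit is feasible -/
def condAt (β : ℝ) (ε : ℕ → ℕ) (k : ℕ) : Prop :=
  β * piB β (shift^[k] ε) < 1 ∨ 1 / (β - 1) < β * piB β (shift^[k] ε)

def ucond (β : ℝ) (ε : ℕ → ℕ) : Prop := ∀ k, condAt β ε k

lemma piB_iter_succ {β : ℝ} (hβ : 1 < β) {ε : ℕ → ℕ} (hε : isSeq ε) (k : ℕ) :
    β * piB β (shift^[k] ε) = (ε k : ℝ) + piB β (shift^[k+1] ε) := by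
  have h := piB_shift_eq hβ (isSeq_iter_shift hε k)
  rw [h, shift_iterate, Nat.zero_add, ← Function.iterate_succ_apply' shift k ε]

lemma uniq_of_cond {β : ℝ} (hβ : 1 < β) (hβ2 : β < 2) {ε : ℕ → ℕ} (hε : isSeq ε)
    (hc : ucond β ε) : ∀ ε', isSeq ε' → piB β ε' = piB β ε → ε' = ε := by
  intro ε' hε' heq
  have hb1 : (0:ℝ) < β - 1 := by linarith
  have step : ∀ k, piB β (shift^[k] ε') = piB β (shift^[k] ε) →
      ε' k = ε k ∧ piB β (shift^[k+1] ε') = piB β (shift^[k+1] ε) := by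
    intro k hk
    have h1 : (ε' k : ℝ) + piB β (shift^[k+1] ε') = (ε k : ℝ) + piB β (shift^[k+1] ε) := by
      rw [← piB_iter_succ hβ hε' k, ← piB_iter_succ hβ hε k, hk]
    have hA0 : 0 ≤ piB β (shift^[k+1] ε') := piB_nonneg hβ
    have hB0 : 0 ≤ piB β (shift^[k+1] ε) := piB_nonneg hβ
    have hA1 : piB β (shift^[k+1] ε') ≤ 1/(β-1) := piB_le hβ (isSeq_iter_shift hε' (k+1))
    have hB1 : piB β (shift^[k+1] ε) ≤ 1/(β-1) := piB_le hβ (isSeq_iter_shift hε (k+1))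
    have hx : β * piB β (shift^[k] ε) = (ε k : ℝ) + piB β (shift^[k+1] ε) :=
      piB_iter_succ hβ hε k
    have hck := hc k
    unfold condAt at hck
    have hdig : ε' k = ε k := by
      rcases Nat.le_one_iff_eq_zero_or_eq_one.mp (hε' k) with ha | ha <;>
      rcases Nat.le_one_iff_eq_zero_or_eq_one.mp (hε k) with hb | hb <;>
      rw [ha, hb] at h1 ⊢ <;>
      first
      | rfl
      | (exfalso
         rw [hb] at hx
         push_cast at h1 hx
         rcases hck with h | h <;> linarith)
    refine ⟨hdig, ?_⟩
    rw [hdig] at h1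
    linarith
  have main : ∀ k, piB β (shift^[k] ε') = piB β (shift^[k] ε) := by
    intro k
    induction k with
    | zero => exact heq
    | succ k ih => exact (step k ih).2
  funext m
  exact (step m (main m)).1

lemma cond_of_uniq {β : ℝ} (hβ : 1 < β) (hβ2 : β < 2) {ε : ℕ → ℕ} (hε : isSeq ε)
    (hu : ∀ ε', isSeq ε' → piB β ε' = piB β ε → ε' = ε) : ucond β ε := by
  have hb0 : (0:ℝ) < β := by linarith
  have hb1 : (0:ℝ) < β - 1 := by linarith
  intro k
  by_contra hnc
  unfold condAt at hnc
  push_neg at hnc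
  obtain ⟨hge, hle'⟩ := hnc
  set x := piB β (shift^[k] ε) with hxdef
  have hx : β * x = (ε k : ℝ) + piB β (shift^[k+1] ε) := piB_iter_succ hβ hε k
  set d : ℕ := 1 - ε k with hd
  set y : ℝ := β * x - (d : ℝ) with hy
  have hdne : d ≠ ε k := by
    rcases Nat.le_one_iff_eq_zero_or_eq_one.mp (hε k) with h | h <;> rw [h] <;> simp [hd, h]
  have hdr : (d:ℝ) = 1 - (ε k : ℝ) := by
    rw [hd, Nat.cast_sub (hε k)]; norm_num
  have hy0 : 0 ≤ y := by
    rcases Nat.le_one_iff_eq_zero_or_eq_one.mp (hε k) with h | h <;>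
      rw [hy, hdr, h] <;> push_cast <;> linarith
  have hy1 : y ≤ 1/(β-1) := by
    have hB1 : piB β (shift^[k+1] ε) ≤ 1/(β-1) := piB_le hβ (isSeq_iter_shift hε (k+1))
    rcases Nat.le_one_iff_eq_zero_or_eq_one.mp (hε k) with h | h <;>
      rw [hy, hdr, h] <;> rw [h] at hx <;> push_cast at hx ⊢ <;> linarith
  -- build the competing expansion
  set ε' : ℕ → ℕ := fun j => if j < k then ε j else if j = k then d else gdig β y (j - k - 1)
    with hε'def
  have hε' : isSeq ε' := by
    intro j
    rw [hε'def]
    dsimp only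
    split
    · exact hε j
    · split
      · exact Nat.sub_le _ _
      · exact isSeq_gdig β y _
  have hshift : shift (shift^[k] ε') = gdig β y := by
    funext m
    show (shift^[k] ε') (m+1) = _
    rw [shift_iterate, hε'def]
    dsimp only
    rw [if_neg (by omega), if_neg (by omega)]
    congr 1
    omega
  have hη0 : ((shift^[k] ε') 0 : ℝ) = (d : ℝ) := by
    rw [shift_iterate, hε'def]
    dsimp only
    rw [if_neg (by omega), if_pos (by omega)]
  have hεk' : isSeq (shift^[k] ε') := isSeq_iter_shift hε' k
  have htail : piB β (shift^[k] ε') = x := by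
    have h2 : β * piB β (shift^[k] ε') = (d : ℝ) + y := by
      rw [piB_shift_eq hβ hεk', hη0, hshift, piB_gdig hβ hβ2 hy0 hy1]
    have h3 : (d : ℝ) + y = β * x := by rw [hy]; ring
    have h4 : β * piB β (shift^[k] ε') = β * x := by rw [h2, h3]
    exact mul_left_cancel₀ (ne_of_gt hb0) h4
  have hval : piB β ε' = piB β ε := by
    rw [piB_split hβ hε' k, piB_split hβ hε k, htail, hxdef]
    congr 1
    apply Finset.sum_congr rfl
    intro j hj
    rw [Finset.mem_range] at hj
    rw [hε'def]
    dsimp only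
    rw [if_pos hj]
  have hcontra := congrFun (hu ε' hε' hval) k
  rw [hε'def] at hcontra
  dsimp only at hcontra
  rw [if_neg (by omega), if_pos rfl] at hcontra
  exact hdne hcontra

lemma memSigma_iff_ucond {β : ℝ} (hβ : 1 < β) (hβ2 : β < 2) {ε : ℕ → ℕ} (hε : isSeq ε) :
    memSigma β ε ↔ ucond β ε := by
  constructor
  · intro h
    exact cond_of_uniq hβ hβ2 hε h.2
  · intro h
    exact ⟨hε, uniq_of_cond hβ hβ2 hε h⟩

/-- the mirror form of the second branch -/
lemma condAt_iff_mirror {β : ℝ} (hβ : 1 < β) {ε : ℕ → ℕ} (hε : isSeq ε) (k : ℕ) :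
    condAt β ε k ↔
      ((ε k : ℝ) + piB β (shift^[k+1] ε) < 1
        ∨ (ε k = 1 ∧ piB β (mirror (shift^[k+1] ε)) < 1)) := by
  have hx : β * piB β (shift^[k] ε) = (ε k : ℝ) + piB β (shift^[k+1] ε) :=
    piB_iter_succ hβ hε k
  have hm : piB β (shift^[k+1] ε) + piB β (mirror (shift^[k+1] ε)) = 1/(β-1) :=
    piB_add_mirror hβ (isSeq_iter_shift hε (k+1))
  have hm0 : 0 ≤ piB β (mirror (shift^[k+1] ε)) := piB_nonneg hβ
  unfold condAt
  rw [hx]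
  constructor
  · rintro (h | h)
    · exact Or.inl h
    · right
      rcases Nat.le_one_iff_eq_zero_or_eq_one.mp (hε k) with h0 | h0
      · exfalso
        rw [h0] at h
        push_cast at h
        linarith
      · refine ⟨h0, ?_⟩
        rw [h0] at h
        push_cast at h
        linarith
  · rintro (h | ⟨h0, h⟩)
    · exact Or.inl h
    · right
      rw [h0]
      push_cast
      linarith

lemma ucond_mono {β β' : ℝ} (hβ : 1 < β) (hle : β ≤ β') (hβ2' : β' < 2)
    {ε : ℕ → ℕ} (hε : isSeq ε) (hc : ucond β ε) : ucond β' ε := by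
  have hβ' : 1 < β' := lt_of_lt_of_le hβ hle
  intro k
  rw [condAt_iff_mirror hβ' hε k]
  have h := hc k
  rw [condAt_iff_mirror hβ hε k] at h
  rcases h with h | ⟨h0, h⟩
  · left
    have := piB_antitone hβ hle (isSeq_iter_shift hε (k+1))
    linarith
  · right
    refine ⟨h0, ?_⟩
    have := piB_antitone hβ hle (isSeq_mirror (shift^[k+1] ε))
    linarith

lemma shift_iterate_mul {ε : ℕ → ℕ} {n : ℕ} (hp : shift^[n] ε = ε) (q : ℕ) :
    shift^[n * q] ε = ε := by
  induction q with
  | zero => simp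
  | succ q ih =>
      have : n * (q + 1) = n + n * q := by ring
      rw [this, Function.iterate_add_apply, ih, hp]

lemma shift_iterate_mod {ε : ℕ → ℕ} {n : ℕ} (hn : 1 ≤ n) (hp : shift^[n] ε = ε) (k : ℕ) :
    shift^[k] ε = shift^[k % n] ε := by
  conv_lhs => rw [← Nat.mod_add_div k n]
  rw [Function.iterate_add_apply, shift_iterate_mul hp]

lemma ucond_of_fin {β : ℝ} {ε : ℕ → ℕ} {n : ℕ} (hn : 1 ≤ n) (hp : shift^[n] ε = ε)
    (h : ∀ k < n, condAt β ε k) : ucond β ε := by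
  intro k
  unfold condAt
  rw [shift_iterate_mod hn hp k]
  exact h (k % n) (Nat.mod_lt k (by omega))

lemma shift_iter_periodic {ε : ℕ → ℕ} {n : ℕ} (hp : shift^[n] ε = ε) (k : ℕ) :
    shift^[n] (shift^[k] ε) = shift^[k] ε := by
  rw [← Function.iterate_add_apply, Nat.add_comm, Function.iterate_add_apply, hp]

lemma ucond_left_open {β0 : ℝ} (hβ0 : 1 < β0) (hβ02 : β0 < 2) {ε : ℕ → ℕ} (hε : isSeq ε)
    {n : ℕ} (hn : 1 ≤ n) (hp : shift^[n] ε = ε) (hc : ucond β0 ε) :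
    ∃ γ, 1 < γ ∧ γ < β0 ∧ ucond γ ε := by
  set F : ℕ → ℝ → ℝ := fun k b =>
    b * ((∑ j ∈ Finset.range n, ((shift^[k] ε) j : ℝ) / b ^ (j+1)) * b ^ n / (b ^ n - 1))
    with hF
  have hFeq : ∀ b, 1 < b → ∀ k, F k b = b * piB b (shift^[k] ε) := by
    intro b hb k
    rw [hF]
    dsimp only
    rw [piB_periodic hb (isSeq_iter_shift hε k) hn (shift_iter_periodic hp k)]
  have hβ0ne : β0 ≠ 0 := by linarith
  have hβ0n : β0 ^ n - 1 ≠ 0 := by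
    have : 1 < β0 ^ n := one_lt_pow₀ hβ0 (by omega)
    linarith
  have hcont : ∀ k, ContinuousAt (F k) β0 := by
    intro k
    rw [hF]
    dsimp only
    refine ContinuousAt.mul continuousAt_id ?_
    refine ContinuousAt.div ?_ (by fun_prop) hβ0n
    refine ContinuousAt.mul ?_ (by fun_prop)
    refine tendsto_finset_sum _ (fun j _ => ?_)
    exact ContinuousAt.div continuousAt_const (by fun_prop) (pow_ne_zero _ hβ0ne)
  have hcontG : ContinuousAt (fun b : ℝ => 1 / (b - 1)) β0 := by
    refine ContinuousAt.div continuousAt_const (by fun_prop) ?_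
    intro h
    have : β0 = 1 := by linarith [sub_eq_zero.mp h]
    linarith
  have hev : ∀ k ∈ Finset.range n, ∀ᶠ b in 𝓝 β0, (F k b < 1 ∨ 1 / (b-1) < F k b) := by
    intro k _
    have h := hc k
    unfold condAt at h
    rw [← hFeq β0 hβ0 k] at h
    rcases h with h | h
    · exact ((hcont k).eventually_lt continuousAt_const h).mono (fun b hb => Or.inl hb)
    · exact (hcontG.eventually_lt (hcont k) h).mono (fun b hb => Or.inr hb)
  have hall : ∀ᶠ b in 𝓝 β0, (∀ k ∈ Finset.range n, (F k b < 1 ∨ 1 / (b-1) < F k b)) ∧ 1 < b :=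
    ((eventually_all_finset (Finset.range n)).2 hev).and (eventually_gt_nhds hβ0)
  have hall' : ∀ᶠ b in 𝓝[<] β0,
      ((∀ k ∈ Finset.range n, (F k b < 1 ∨ 1 / (b-1) < F k b)) ∧ 1 < b) ∧ b < β0 :=
    (hall.filter_mono nhdsWithin_le_nhds).and eventually_mem_nhdsWithin
  obtain ⟨γ, ⟨hconds, hγ1⟩, hγlt⟩ := hall'.exists
  refine ⟨γ, hγ1, hγlt, ?_⟩
  apply ucond_of_fin hn hp
  intro k hk
  unfold condAt
  rw [← hFeq γ hγ1 k]
  exact hconds k (Finset.mem_range.mpr hk)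

lemma exists_one_zero {n : ℕ} (hn : 2 ≤ n) {ε : ℕ → ℕ} (hε : isSeq ε)
    (hp : periodicSmallest n ε) : ∃ k, ε k = 1 ∧ ε (k+1) = 0 := by
  obtain ⟨hn1, hper, hmin⟩ := hp
  by_contra hno
  push_neg at hno
  have hup : ∀ k, ε k = 1 → ε (k+1) = 1 := by
    intro k h1
    have := hno k h1
    have := hε (k+1)
    omega
  have hshift1 : shift ε ≠ ε := hmin 1 le_rfl (by omega)
  by_cases hz : ∀ k, ε k = 0
  · apply hshift1
    funext k
    show ε (k+1) = ε k
    rw [hz k, hz (k+1)]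
  · push_neg at hz
    obtain ⟨k0, hk0⟩ := hz
    have hk01 : ε k0 = 1 := by have := hε k0; omega
    have hge : ∀ m, ε (k0 + m) = 1 := by
      intro m
      induction m with
      | zero => exact hk01
      | succ m ih => rw [← Nat.add_assoc]; exact hup _ ih
    have hall : ∀ k, ε k = 1 := by
      intro k
      have hmul : shift^[n * (k0+1)] ε = ε := shift_iterate_mul hper (k0+1)
      have h1 : ε (k + n * (k0+1)) = ε k := by
        conv_rhs => rw [← hmul]
        rw [shift_iterate]
      have h2 : ε (k + n * (k0+1)) = 1 := by
        have hge2 : k0 ≤ k + n * (k0+1) := by nlinarith [hn1]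
        have := hge (k + n * (k0+1) - k0)
        rwa [Nat.add_sub_cancel' hge2] at this
      omega
    apply hshift1
    funext k
    show ε (k+1) = ε k
    rw [hall k, hall (k+1)]

lemma lower_bound_aux {n : ℕ} (hn : 2 ≤ n) {β : ℝ} (hβ : 1 < β)
    (hβle : β ≤ 1 + (1/2) ^ (n+1)) (hβ2 : β < 2) :
    ¬ ∃ ε, memSigma β ε ∧ periodicSmallest n ε := by
  rintro ⟨ε, hmem, hps⟩
  have hε : isSeq ε := hmem.1
  have huc : ucond β ε := (memSigma_iff_ucond hβ hβ2 hε).1 hmem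
  obtain ⟨k, hk1, hk0⟩ := exists_one_zero hn hε hps
  have h := huc k
  rw [condAt_iff_mirror hβ hε k] at h
  rcases h with h | ⟨_, h⟩
  · rw [hk1] at h
    have := piB_nonneg hβ (ε := shift^[k+1] ε)
    push_cast at h
    linarith
  · -- piB β (mirror (shift^[k+1] ε)) < 1, but it is ≥ 1/β + 1/β^(n+1) ≥ 1
    set m := mirror (shift^[k+1] ε) with hm
    have hm0 : m 0 = 1 := by
      rw [hm]
      show 1 - (shift^[k+1] ε) 0 = 1
      rw [shift_iterate, Nat.zero_add, hk0]
    have hmn : m n = 1 := by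
      rw [hm]
      show 1 - (shift^[k+1] ε) n = 1
      rw [shift_iterate]
      have : ε (n + (k+1)) = ε (k+1) := by
        conv_rhs => rw [← hps.2.1]
        rw [shift_iterate, Nat.add_comm]
      rw [this, hk0]
    have hsum := summable_piB hβ (isSeq_mirror (shift^[k+1] ε))
    have hlow : 1/β + 1/β^(n+1) ≤ piB β m := by
      have hsub : ∑ j ∈ ({0, n} : Finset ℕ), (m j : ℝ) / β ^ (j+1) ≤ piB β m := by
        apply Summable.sum_le_tsum
        · intro j _
          have : (0:ℝ) < β := by linarith
          positivity
        · exact hsum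
      rwa [Finset.sum_pair (by omega : (0:ℕ) ≠ n), hm0, hmn, Nat.cast_one,
        pow_one] at hsub
    have hge1 : 1 ≤ 1/β + 1/β^(n+1) := by
      have hb0 : (0:ℝ) < β := by linarith
      have h1 : 2 - β ≤ 1/β := by
        rw [le_div_iff₀ hb0]
        nlinarith [sq_nonneg (β - 1)]
      have h2 : β - 1 ≤ 1/β^(n+1) := by
        rw [le_div_iff₀ (by positivity)]
        have hle2 : β ≤ 2 := by linarith
        have hp1 : β ^ (n+1) ≤ 2 ^ (n+1) := pow_le_pow_left₀ (by linarith) hle2 _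
        have hd : β - 1 ≤ (1/2) ^ (n+1) := by linarith
        have hq : ((1:ℝ)/2) ^ (n+1) * 2 ^ (n+1) = 1 := by
          rw [← mul_pow]
          norm_num
        calc (β - 1) * β ^ (n+1) ≤ (1/2) ^ (n+1) * 2 ^ (n+1) := by
              apply mul_le_mul hd hp1 (by positivity) (by positivity)
          _ = 1 := hq
      linarith
    linarith

def epat (n : ℕ) : ℕ → ℕ := fun k => if (k+1) % n = 0 then 0 else 1

lemma isSeq_epat (n : ℕ) : isSeq (epat n) := by
  intro k; unfold epat; split <;> norm_num

lemma epat_per {n : ℕ} (hn : 1 ≤ n) : shift^[n] (epat n) = epat n := by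
  funext k
  rw [shift_iterate]
  unfold epat
  have : (k + n + 1) % n = (k + 1) % n := by
    rw [show k + n + 1 = k + 1 + n by omega, Nat.add_mod_right]
  rw [this]

lemma epat_smallest {n : ℕ} (hn : 2 ≤ n) : periodicSmallest n (epat n) := by
  refine ⟨by omega, epat_per (by omega), ?_⟩
  intro j hj1 hjn hcontra
  have h1 := congrFun hcontra (n - 1 - j)
  rw [shift_iterate] at h1
  unfold epat at h1
  have e1 : n - 1 - j + j + 1 = n := by omega
  have e2 : (n - 1 - j + 1) % n = n - j := by
    rw [Nat.mod_eq_of_lt (by omega)]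
    omega
  rw [e1, e2, Nat.mod_self] at h1
  rw [if_pos rfl, if_neg (by omega)] at h1
  exact absurd h1 (by omega)

lemma mirror_epat_sum {n : ℕ} (hn : 2 ≤ n) {β : ℝ} (hβ : 1 < β) :
    ∑ j ∈ Finset.range n, ((mirror (epat n)) j : ℝ) / β ^ (j+1) = 1 / β ^ n := by
  rw [Finset.sum_eq_single (n-1)]
  · have : mirror (epat n) (n-1) = 1 := by
      unfold mirror epat
      rw [show n - 1 + 1 = n by omega, Nat.mod_self, if_pos rfl]
    rw [this, Nat.cast_one, show n - 1 + 1 = n by omega]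
  · intro j hj hne
    rw [Finset.mem_range] at hj
    have : mirror (epat n) j = 0 := by
      unfold mirror epat
      rw [if_neg ?_]
      have hj1 : j + 1 < n ∨ j + 1 = n := by omega
      rcases hj1 with h | h
      · rw [Nat.mod_eq_of_lt h]; omega
      · omega
    rw [this, Nat.cast_zero, zero_div]
  · intro h
    exact absurd (Finset.mem_range.mpr (by omega)) h

lemma piB_mirror_epat {n : ℕ} (hn : 2 ≤ n) {β : ℝ} (hβ : 1 < β) :
    piB β (mirror (epat n)) = 1 / (β ^ n - 1) := by
  have hperm : shift^[n] (mirror (epat n)) = mirror (epat n) := by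
    rw [← mirror_shift, epat_per (by omega)]
  have hbn : 1 < β ^ n := one_lt_pow₀ hβ (by omega)
  rw [piB_periodic hβ (isSeq_mirror _) (by omega) hperm, mirror_epat_sum hn hβ]
  field_simp

lemma epat_shift_sum {n k : ℕ} (hn : 2 ≤ n) (hk : k + 2 ≤ n) {β : ℝ} (hβ : 1 < β) :
    ∑ j ∈ Finset.range n, ((shift^[k+1] (mirror (epat n))) j : ℝ) / β ^ (j+1)
      = 1 / β ^ (n - k - 1) := by
  have hval : ∀ j, shift^[k+1] (mirror (epat n)) j = if (j + k + 2) % n = 0 then 1 else 0 := by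
    intro j
    rw [shift_iterate]
    unfold mirror epat
    have : j + (k+1) + 1 = j + k + 2 := by omega
    rw [this]
    split <;> simp
  rw [Finset.sum_eq_single (n - k - 2)]
  · rw [hval, if_pos (by rw [show n - k - 2 + k + 2 = n by omega, Nat.mod_self]),
      Nat.cast_one, show n - k - 2 + 1 = n - k - 1 by omega]
  · intro j hj hne
    rw [Finset.mem_range] at hj
    rw [hval, if_neg ?_, Nat.cast_zero, zero_div]
    intro hmod
    have hdvd := Nat.dvd_of_mod_eq_zero hmod
    obtain ⟨c, hc⟩ := hdvd
    rcases Nat.lt_or_ge c 2 with hc2 | hc2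
    · interval_cases c <;> omega
    · have : n * 2 ≤ n * c := Nat.mul_le_mul_left n hc2
      omega
  · intro h
    exact absurd (Finset.mem_range.mpr (by omega)) h

lemma nonempty_aux {n : ℕ} (hn : 2 ≤ n) :
    ∃ β, (1:ℝ) < β ∧ β < 2 ∧ ∃ ε, memSigma β ε ∧ periodicSmallest n ε := by
  set q : ℝ := (1/4) ^ n with hqdef
  have hq0 : 0 < q := by positivity
  have hq16 : q ≤ 1/16 := by
    calc q ≤ (1/4:ℝ)^2 := pow_le_pow_of_le_one (by norm_num) (by norm_num) hn
      _ = 1/16 := by norm_num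
  set β : ℝ := 2 - q with hβdef
  have hβ1 : 1 < β := by rw [hβdef]; linarith
  have hβ2 : β < 2 := by rw [hβdef]; linarith
  have hb0 : (0:ℝ) < β := by linarith
  have hbn1 : 1 < β ^ n := one_lt_pow₀ hβ1 (by omega)
  have hq4 : q * 4 ^ n = 1 := by
    rw [hqdef, ← mul_pow]
    norm_num
  have hβ4n : β ^ n < 4 ^ n := pow_lt_pow_left₀ (by linarith) (by linarith) (by omega)
  have hqβn : q * β ^ n < 1 := by
    calc q * β ^ n < q * 4 ^ n := by apply mul_lt_mul_of_pos_left hβ4n hq0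
      _ = 1 := hq4
  refine ⟨β, hβ1, hβ2, epat n, ?_, epat_smallest hn⟩
  rw [memSigma_iff_ucond hβ1 hβ2 (isSeq_epat n)]
  apply ucond_of_fin (by omega : 1 ≤ n) (epat_per (by omega))
  intro k hk
  rw [condAt_iff_mirror hβ1 (isSeq_epat n) k]
  by_cases hcase : k + 1 = n
  · -- k = n-1, digit 0, first branch
    left
    have hd : epat n k = 0 := by
      unfold epat
      rw [hcase, Nat.mod_self, if_pos rfl]
    rw [hd, Nat.cast_zero, zero_add, hcase, epat_per (by omega)]
    -- piB β (epat n) < 1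
    have hmir := piB_add_mirror hβ1 (isSeq_epat n)
    rw [piB_mirror_epat hn hβ1] at hmir
    -- piB = 1/(β-1) - 1/(β^n-1) < 1
    have h1a : (0:ℝ) < β - 1 := by linarith
    have h1b : (0:ℝ) < β ^ n - 1 := by linarith
    have hβm1 : β - 1 = 1 - q := by rw [hβdef]; ring
    have key : (1 - q) * (β ^ n - 1) > (β ^ n - 1) - (β - 1) := by
      rw [hβm1]
      nlinarith [hqβn, hq0]
    have hfrac : 1/(β-1) - 1/(β^n-1) < 1 := by
      rw [div_sub_div _ _ (ne_of_gt h1a) (ne_of_gt h1b), div_lt_one (by positivity)]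
      rw [hβm1]
      nlinarith [key]
    linarith
  · -- k+1 < n, digit 1, second branch
    right
    have hk1 : k + 2 ≤ n := by omega
    have hd : epat n k = 1 := by
      unfold epat
      rw [Nat.mod_eq_of_lt (by omega), if_neg (by omega)]
    refine ⟨hd, ?_⟩
    rw [mirror_shift]
    have hperm : shift^[n] (shift^[k+1] (mirror (epat n))) = shift^[k+1] (mirror (epat n)) := by
      apply shift_iter_periodic
      rw [← mirror_shift, epat_per (by omega)]
    rw [piB_periodic hβ1 (isSeq_iter_shift (isSeq_mirror _) (k+1)) (by omega) hperm,
      epat_shift_sum hn hk1 hβ1]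
    -- 1/β^(n-k-1) * β^n / (β^n - 1) < 1
    have hsplit : β ^ n = β ^ (n-k-1) * β ^ (k+1) := by
      rw [← pow_add]
      congr 1
      omega
    have hpk : (0:ℝ) < β ^ (n-k-1) := by positivity
    have h1b : (0:ℝ) < β ^ n - 1 := by linarith
    rw [div_mul_eq_mul_div, div_div, div_lt_one (by positivity), one_mul, hsplit]
    -- goal: β^(n-k-1)*β^(k+1) < β^(n-k-1)*(β^n-1)
    apply mul_lt_mul_of_pos_left _ hpk
    -- β^(k+1) < β^n - 1
    have h1 : β ^ (k+1) ≤ β ^ (n-1) := pow_le_pow_right₀ (by linarith) (by omega)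
    have h2 : β ^ (n-1) * (β - 1) > 1 := by
      have hb : β ^ (n-1) ≥ β := by
        calc β = β ^ 1 := (pow_one β).symm
          _ ≤ β ^ (n-1) := pow_le_pow_right₀ (by linarith) (by omega)
      have hβm1 : β - 1 = 1 - q := by rw [hβdef]; ring
      rw [hβm1]
      nlinarith [hq0, hq16, hb]
    have h3 : β ^ n = β ^ (n-1) * β := by
      rw [← pow_succ]
      congr 1
      omega
    rw [← hsplit, h3]
    nlinarith [h1, h2]


/-- For every n ≥ 2 there is β_n ∈ (1,2) with U_n = (β_n, 2). -/
theorem stmt0 : ∀ n : ℕ, 2 ≤ n → ∃ βn : ℝ, 1 < βn ∧ βn < 2 ∧ U n = Set.Ioo βn 2 := by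
  intro n hn
  set S := U n with hSdef
  have hmemS : ∀ β, β ∈ S ↔ (1 < β ∧ β < 2 ∧ ∃ ε, memSigma β ε ∧ periodicSmallest n ε) := by
    intro β
    rw [hSdef]
    rfl
  have hup : ∀ β β', β ∈ S → β < β' → β' < 2 → β' ∈ S := by
    intro β β' hβS hlt hlt2
    obtain ⟨hβ1, hβ2, ε, hmem, hps⟩ := (hmemS β).1 hβS
    refine (hmemS β').2 ⟨by linarith, hlt2, ε, ?_, hps⟩
    have hε := hmem.1
    rw [memSigma_iff_ucond hβ1 hβ2 hε] at hmem
    rw [memSigma_iff_ucond (by linarith) hlt2 hε]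
    exact ucond_mono hβ1 hlt.le hlt2 hε hmem
  have hlo : ∀ β ∈ S, ∃ γ ∈ S, γ < β := by
    intro β hβS
    obtain ⟨hβ1, hβ2, ε, hmem, hps⟩ := (hmemS β).1 hβS
    have hε := hmem.1
    have huc := (memSigma_iff_ucond hβ1 hβ2 hε).1 hmem
    obtain ⟨γ, hγ1, hγβ, hγc⟩ := ucond_left_open hβ1 hβ2 hε hps.1 hps.2.1 huc
    have hγ2 : γ < 2 := by linarith
    exact ⟨γ, (hmemS γ).2 ⟨hγ1, hγ2, ε, (memSigma_iff_ucond hγ1 hγ2 hε).2 hγc, hps⟩, hγβ⟩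
  have hlb : ∀ β ∈ S, 1 + (1/2:ℝ)^(n+1) < β := by
    intro β hβS
    obtain ⟨hβ1, hβ2, hex⟩ := (hmemS β).1 hβS
    by_contra hle
    push_neg at hle
    exact lower_bound_aux hn hβ1 hle hβ2 hex
  obtain ⟨β0, hβ01, hβ02, hex0⟩ := nonempty_aux hn
  have hS0 : β0 ∈ S := (hmemS β0).2 ⟨hβ01, hβ02, hex0⟩
  have hSne : S.Nonempty := ⟨β0, hS0⟩
  have hbdd : BddBelow S := ⟨1, fun β hβ => le_of_lt ((hmemS β).1 hβ).1⟩
  refine ⟨sInf S, ?_, ?_, ?_⟩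
  · have h1 : (1:ℝ) < 1 + (1/2:ℝ)^(n+1) := by
      have : (0:ℝ) < (1/2:ℝ)^(n+1) := by positivity
      linarith
    exact lt_of_lt_of_le h1 (le_csInf hSne fun β hβ => (hlb β hβ).le)
  · exact lt_of_le_of_lt (csInf_le hbdd hS0) hβ02
  · apply Set.eq_of_subset_of_subset
    · intro β hβ
      obtain ⟨γ, hγS, hγβ⟩ := hlo β hβ
      exact ⟨lt_of_le_of_lt (csInf_le hbdd hγS) hγβ, ((hmemS β).1 hβ).2.1⟩
    · rintro β ⟨h1, h2⟩
      obtain ⟨γ, hγS, hγβ⟩ := exists_lt_of_csInf_lt hSne h1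
      exact hup γ β hγS hγβ h2
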